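/- If A and B are equationally Artinian groups, then the direct product A × B is equationally Artinian. -/
import Mathlib


/-- The Diophantine radical `Rad_H(E)` of a subset `E ⊆ Hⁿ` (coefficients from `H` itself). -/
def RadH (H : Type*) [Group H] {n : ℕ} (E : Set (Fin n → H)) :
    Set (Monoid.Coprod H (FreeGroup (Fin n))) :=
  {w | ∀ e ∈ E, Monoid.Coprod.lift (MonoidHom.id H) (FreeGroup.lift e) w = 1}

/-- A group is equationally Artinian (Diophantine sense). -/
def EquationallyArtinian (H : Type*) [Group H] : Prop :=
  ∀ (n : ℕ) (E : Set (Fin n → H)), ∃ E₀ ⊆ E, E₀.Finite ∧ RadH H E₀ = RadH H E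

/-- Compatibility of evaluation with a group homomorphism on coefficients. -/
lemma lift_comm {H K : Type*} [Group H] [Group K] (f : H →* K) {n : ℕ} (e : Fin n → H)
    (w : Monoid.Coprod H (FreeGroup (Fin n))) :
    f (Monoid.Coprod.lift (MonoidHom.id H) (FreeGroup.lift e) w) =
      Monoid.Coprod.lift (MonoidHom.id K) (FreeGroup.lift (f ∘ e))
        (Monoid.Coprod.map f (MonoidHom.id (FreeGroup (Fin n))) w) := by
  have : f.comp (Monoid.Coprod.lift (MonoidHom.id H) (FreeGroup.lift e)) =
      (Monoid.Coprod.lift (MonoidHom.id K) (FreeGroup.lift (f ∘ e))).comp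
        (Monoid.Coprod.map f (MonoidHom.id (FreeGroup (Fin n)))) := by
    apply Monoid.Coprod.hom_ext
    · ext a
      simp
    · ext x
      simp
  exact DFunLike.congr_fun this w

/-- Finite subsets of an image are images of finite subsets. -/
lemma exists_finite_preimage {α β : Type*} {f : α → β} {E : Set α} {s : Set β}
    (hs : s.Finite) (h : s ⊆ f '' E) : ∃ t ⊆ E, t.Finite ∧ f '' t = s := by
  choose F hFE hFf using fun b (hb : b ∈ s) => h hb
  refine ⟨{x | ∃ b, ∃ hb : b ∈ s, F b hb = x}, ?_, hs.dependent_image F, ?_⟩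
  · rintro x ⟨b, hb, rfl⟩
    exact hFE b hb
  · apply Set.Subset.antisymm
    · rintro y ⟨x, ⟨b, hb, rfl⟩, rfl⟩
      rw [hFf b hb]
      exact hb
    · intro b hb
      exact ⟨F b hb, ⟨b, hb, rfl⟩, hFf b hb⟩

/-- The direct product of two equationally Artinian groups is equationally Artinian. -/
theorem prod_equationallyArtinian {A B : Type*} [Group A] [Group B]
    (hA : EquationallyArtinian A) (hB : EquationallyArtinian B) :
    EquationallyArtinian (A × B) := by
  intro n E
  set fA : (Fin n → A × B) → (Fin n → A) := fun e => Prod.fst ∘ e with hfA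
  set fB : (Fin n → A × B) → (Fin n → B) := fun e => Prod.snd ∘ e with hfB
  obtain ⟨EA₀, hEA₀sub, hEA₀fin, hEA₀rad⟩ := hA n (fA '' E)
  obtain ⟨EB₀, hEB₀sub, hEB₀fin, hEB₀rad⟩ := hB n (fB '' E)
  obtain ⟨tA, htAE, htAfin, htAim⟩ := exists_finite_preimage hEA₀fin hEA₀sub
  obtain ⟨tB, htBE, htBfin, htBim⟩ := exists_finite_preimage hEB₀fin hEB₀sub
  refine ⟨tA ∪ tB, Set.union_subset htAE htBE, htAfin.union htBfin, ?_⟩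
  apply Set.Subset.antisymm
  · -- RadH (tA ∪ tB) ⊆ RadH E
    intro w hw e he
    have hwA : Monoid.Coprod.map (MonoidHom.fst A B) (MonoidHom.id (FreeGroup (Fin n))) w
        ∈ RadH A (fA '' E) := by
      rw [← hEA₀rad]
      intro a ha
      obtain ⟨e', he', rfl⟩ : a ∈ fA '' tA := htAim ▸ ha
      have h1 := hw e' (Or.inl he')
      have := lift_comm (MonoidHom.fst A B) e' w
      rw [h1, map_one] at this
      exact this.symm
    have hwB : Monoid.Coprod.map (MonoidHom.snd A B) (MonoidHom.id (FreeGroup (Fin n))) w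
        ∈ RadH B (fB '' E) := by
      rw [← hEB₀rad]
      intro b hb
      obtain ⟨e', he', rfl⟩ : b ∈ fB '' tB := htBim ▸ hb
      have h1 := hw e' (Or.inr he')
      have := lift_comm (MonoidHom.snd A B) e' w
      rw [h1, map_one] at this
      exact this.symm
    have hA1 : (Monoid.Coprod.lift (MonoidHom.id (A × B)) (FreeGroup.lift e) w).1 = 1 := by
      show (MonoidHom.fst A B) (Monoid.Coprod.lift (MonoidHom.id (A × B)) (FreeGroup.lift e) w) = 1
      rw [lift_comm (MonoidHom.fst A B) e w]
      exact hwA (fA e) ⟨e, he, rfl⟩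
    have hB1 : (Monoid.Coprod.lift (MonoidHom.id (A × B)) (FreeGroup.lift e) w).2 = 1 := by
      show (MonoidHom.snd A B) (Monoid.Coprod.lift (MonoidHom.id (A × B)) (FreeGroup.lift e) w) = 1
      rw [lift_comm (MonoidHom.snd A B) e w]
      exact hwB (fB e) ⟨e, he, rfl⟩
    exact Prod.ext hA1 hB1
  · -- RadH E ⊆ RadH (tA ∪ tB)
    intro w hw e he
    exact hw e (he.elim (fun h => htAE h) (fun h => htBE h))
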